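/- Let m ≥ 1, let M, N ⊆ [m] with ∅ ≠ N ⊊ [m], and let D = aΔ_M + cΔ_N^c ⊆ E^m. Then the binary Gray image Φ(C^R_D) is an F₂-linear code of length n = 2^{|M|+1}(2^m−2^{|N|}), with 2^m codewords (F₂-dimension m), minimum distance d = 2^{|M|}(2^m−2^{|N|}), and every nonzero codeword has Hamming weight in {2^{m+|M|}, 2^{|M|}(2^m−2^{|N|−1}), 2^{|M|}(2^m−2^{|N|})}. Furthermore: (i) if |N| ≤ m−2, then Φ(C^R_D) is a minimal code; (ii) if |M|+|N| ≤ m−1 and 2^{|M|+1}−1 < |M|+|N|+1, then Φ(C^R_D) is distance optimal, i.e., there exists no F₂-linear code of length n and dimension m all of whose nonzero codewords have Hamming weight ≥ d+1; (iii) if m ≤ |M|+|N| ≤ 2m−1 and 0 < 2^{|M|+|N|+1−m}(2^{m−|N|}−1) < m, then Φ(C^R_D) is likewise distance optimal. -/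

import Mathlib

open Finset

/-- The simplicial complex `Δ_M ⊆ 𝔽₂^m` generated by `M ⊆ [m]`:
all vectors whose support is contained in `M`. -/
def deltaC {m : ℕ} (M : Finset (Fin m)) : Finset (Fin m → ZMod 2) :=
  Finset.univ.filter (fun w => ∀ i, w i ≠ 0 → i ∈ M)

/-- Dot product over `𝔽₂`. -/
def dotp {m : ℕ} (x y : Fin m → ZMod 2) : ZMod 2 := ∑ i, x i * y i

/-- The Gray map on a single element `a·s + c·t ↔ (s, t)` of `E = 𝔽₂ × 𝔽₂`:
`Φ(as + ct) = (t, s + t)`. -/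
def grayPair (e : ZMod 2 × ZMod 2) : Fin 2 → ZMod 2 := ![e.2, e.1 + e.2]

/-- The left codeword `c^L_D(v)` for `v = aα + cβ ↔ (α, β)`:
its coordinate at `d = (t₁, t₂) ∈ D` is `a(α·t₁) + c(β·t₁) ↔ (α·t₁, β·t₁)`. -/
def cwL {m : ℕ} (Ds : Finset ((Fin m → ZMod 2) × (Fin m → ZMod 2)))
    (v : (Fin m → ZMod 2) × (Fin m → ZMod 2)) :
    {d // d ∈ Ds} → ZMod 2 × ZMod 2 :=
  fun d => (dotp v.1 d.1.1, dotp v.2 d.1.1)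

/-- The Gray image `Φ(c^L_D(v)) ∈ 𝔽₂^{2|D|}` of the left codeword `c^L_D(v)`;
its Hamming weight (`hammingNorm`) is the Lee weight of `c^L_D(v)`. -/
def gcwL {m : ℕ} (Ds : Finset ((Fin m → ZMod 2) × (Fin m → ZMod 2)))
    (v : (Fin m → ZMod 2) × (Fin m → ZMod 2)) :
    {d // d ∈ Ds} × Fin 2 → ZMod 2 :=
  fun x => grayPair (cwL Ds v x.1) x.2

/-- The right codeword `c^R_D(v)` for `v = aα + cβ ↔ (α, β)`:
its coordinate at `d = (t₁, t₂) ∈ D` is `a(t₁·α) + c(t₂·α) ↔ (t₁·α, t₂·α)`. -/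
def cwR {m : ℕ} (Ds : Finset ((Fin m → ZMod 2) × (Fin m → ZMod 2)))
    (v : (Fin m → ZMod 2) × (Fin m → ZMod 2)) :
    {d // d ∈ Ds} → ZMod 2 × ZMod 2 :=
  fun d => (dotp d.1.1 v.1, dotp d.1.2 v.1)

/-- The Gray image `Φ(c^R_D(v)) ∈ 𝔽₂^{2|D|}` of the right codeword `c^R_D(v)`;
its Hamming weight (`hammingNorm`) is the Lee weight of `c^R_D(v)`. -/
def gcwR {m : ℕ} (Ds : Finset ((Fin m → ZMod 2) × (Fin m → ZMod 2)))
    (v : (Fin m → ZMod 2) × (Fin m → ZMod 2)) :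
    {d // d ∈ Ds} × Fin 2 → ZMod 2 :=
  fun x => grayPair (cwR Ds v x.1) x.2



def cd (a b : ℕ) : ℕ := (a + b - 1) / b

lemma cd_le_iff {a b t : ℕ} (hb : 0 < b) : cd a b ≤ t ↔ a ≤ b * t := by
  unfold cd; rw [Nat.div_le_iff_le_mul_add_pred hb]; omega

lemma cd_mono {a a' b : ℕ} (h : a ≤ a') : cd a b ≤ cd a' b := by
  rcases Nat.eq_zero_or_pos b with hb | hb
  · subst hb; simp [cd]
  · rw [cd_le_iff hb]; exact le_trans h ((cd_le_iff hb).mp le_rfl)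

lemma cd_cd {a b c : ℕ} (hb : 0 < b) (hc : 0 < c) : cd (cd a b) c = cd a (b * c) := by
  have h1 : ∀ t, cd (cd a b) c ≤ t ↔ cd a (b*c) ≤ t := fun t => by
    rw [cd_le_iff hc, cd_le_iff hb, cd_le_iff (Nat.mul_pos hb hc), mul_assoc]
  exact le_antisymm ((h1 _).mpr le_rfl) ((h1 _).mp le_rfl)

lemma cd_one (a : ℕ) : cd a 1 = a := by simp [cd]

lemma zmod2_cases (u : ZMod 2) : u = 0 ∨ u = 1 := by revert u; decide

lemma card_filter_subtype {ι : Type*} [Fintype ι] [DecidableEq ι]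
    (q : ι → Prop) [DecidablePred q] (p : ι → Prop) [DecidablePred p] :
    #(univ.filter (fun j : {i // q i} => p j.1)) = #(univ.filter (fun i => q i ∧ p i)) := by
  apply Finset.card_bij (fun j _ => j.1)
  · intro j hj; simp_all [j.2]
  · intro j _ j' _ h; exact Subtype.ext h
  · intro i hi
    simp only [mem_filter, mem_univ, true_and] at hi
    exact ⟨⟨i, hi.1⟩, by simp [hi.2], rfl⟩

section Griesmer

variable {ι : Type} [Fintype ι] [DecidableEq ι]

/-- support decomposition relative to a codeword c over ZMod 2 -/
lemma wt_split (c x : ι → ZMod 2) :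
    hammingNorm x = #(univ.filter (fun i => c i ≠ 0 ∧ x i ≠ 0))
      + #(univ.filter (fun i => c i = 0 ∧ x i ≠ 0)) := by
  rw [hammingNorm]
  rw [← Finset.card_union_of_disjoint]
  · congr 1
    ext i
    simp only [mem_filter, mem_union, mem_univ, true_and]
    tauto
  · rw [Finset.disjoint_filter]
    intro i _ h1 h2
    exact h1.1 h2.1


lemma zmod2_add_ne {u v : ZMod 2} (hv : v = 1) : u + v ≠ 0 ↔ u = 0 := by
  subst hv; rcases zmod2_cases u with h | h <;> simp [h] <;> decide

/-- key: supp-in-c part of x and x+c partition supp c -/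
lemma wt_in_add (c x : ι → ZMod 2) :
    #(univ.filter (fun i => c i ≠ 0 ∧ x i ≠ 0))
      + #(univ.filter (fun i => c i ≠ 0 ∧ (x + c) i ≠ 0)) = hammingNorm c := by
  rw [hammingNorm, ← Finset.card_union_of_disjoint]
  · congr 1
    ext i
    simp only [mem_filter, mem_union, mem_univ, true_and, Pi.add_apply]
    constructor
    · rintro (h | h) <;> exact h.1
    · intro hc
      have hc1 : c i = 1 := (zmod2_cases (c i)).resolve_left hc
      rcases zmod2_cases (x i) with h | h
      · right; exact ⟨hc, by rw [(zmod2_add_ne hc1)]; exact h⟩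
      · left; exact ⟨hc, by simp [h]⟩
  · rw [Finset.disjoint_filter]
    intro i _ h1 h2
    have hc1 : c i = 1 := (zmod2_cases (c i)).resolve_left h1.1
    have hx1 : x i = 1 := (zmod2_cases (x i)).resolve_left h1.2
    apply h2.2
    show x i + c i = 0
    rw [hx1, hc1]; decide

end Griesmer

theorem griesmer : ∀ (k : ℕ) (ι : Type) [Fintype ι] [DecidableEq ι]
    (C : Submodule (ZMod 2) (ι → ZMod 2)) (D : ℕ),
    Nat.card C = 2 ^ k → (∀ x ∈ C, x ≠ 0 → D ≤ hammingNorm x) →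
    ∑ i ∈ range k, cd D (2 ^ i) ≤ Fintype.card ι := by
  intro k
  induction k with
  | zero => intro ι _ _ C D _ _; simp
  | succ k IH =>
    intro ι _ _ C D hcard hmin
    have h1 : 1 < Nat.card C := by
      rw [hcard]; exact Nat.one_lt_two_pow (by omega)
    have hnt : Nontrivial C := Finite.one_lt_card_iff_nontrivial.mp h1
    obtain ⟨x0, hx0⟩ := exists_ne (0 : C)
    set S : Set ℕ := {n | ∃ x, x ∈ C ∧ x ≠ 0 ∧ hammingNorm x = n} with hSdef
    have hS : S.Nonempty :=
      ⟨_, x0.1, x0.2, fun h => hx0 (Subtype.ext h), rfl⟩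
    obtain ⟨c, hcC, hc0, hcw⟩ := Nat.sInf_mem hS
    set w := sInf S with hwdef
    have hwpos : 0 < w := by
      rw [← hcw]; exact Nat.pos_of_ne_zero (hammingNorm_ne_zero_iff.mpr hc0)
    have hwmin : ∀ x ∈ C, x ≠ 0 → w ≤ hammingNorm x := fun x hx hx0 =>
      Nat.sInf_le ⟨x, hx, hx0, rfl⟩
    have hDw : D ≤ w := hcw ▸ hmin c hcC hc0
    have hcc : c + c = 0 := by
      ext i; exact CharTwo.add_self_eq_zero _
    letI J := {i : ι // c i = 0}
    let r : (ι → ZMod 2) →ₗ[ZMod 2] (J → ZMod 2) :=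
      LinearMap.funLeft (ZMod 2) (ZMod 2) (fun j => j.1)
    let f : C →ₗ[ZMod 2] (J → ZMod 2) := r.comp C.subtype
    have hnormr : ∀ x : ι → ZMod 2,
        hammingNorm (r x) = #(univ.filter fun i => c i = 0 ∧ x i ≠ 0) := by
      intro x
      exact card_filter_subtype (fun i => c i = 0) (fun i => x i ≠ 0)
    -- kernel is {0, c}
    have hker : ∀ x : C, f x = 0 → x = 0 ∨ (x : ι → ZMod 2) = c := by
      intro x hx
      by_contra hcon
      push_neg at hcon
      obtain ⟨hx0', hxc⟩ := hcon
      have hsupp : ∀ i (h : c i = 0), (x : ι → ZMod 2) i = 0 := by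
        intro i h
        exact congrFun hx ⟨i, h⟩
      have hB : #(univ.filter fun i => c i = 0 ∧ (x : ι → ZMod 2) i ≠ 0) = 0 := by
        rw [Finset.card_eq_zero, Finset.filter_eq_empty_iff]
        intro i _ h
        exact h.2 (hsupp i h.1)
      have hB2 : #(univ.filter fun i => c i = 0 ∧ ((x : ι → ZMod 2) + c) i ≠ 0) = 0 := by
        rw [Finset.card_eq_zero, Finset.filter_eq_empty_iff]
        intro i _ h
        apply h.2
        show (x : ι → ZMod 2) i + c i = 0
        rw [hsupp i h.1, h.1, add_zero]
      have e1 := wt_split c (x : ι → ZMod 2)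
      have e2 := wt_split c ((x : ι → ZMod 2) + c)
      have e3 := wt_in_add c (x : ι → ZMod 2)
      have hxne : (x : ι → ZMod 2) ≠ 0 := fun h => hx0' (Subtype.ext h)
      have hxcne : (x : ι → ZMod 2) + c ≠ 0 := by
        intro h
        apply hxc
        have : (x : ι → ZMod 2) + c + c = c := by rw [h, zero_add]
        rwa [add_assoc, hcc, add_zero] at this
      have l1 := hwmin _ x.2 hxne
      have l2 := hwmin _ (C.add_mem x.2 hcC) hxcne
      rw [hcw] at e3
      omega
    have hfc : f ⟨c, hcC⟩ = 0 := by
      ext j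
      exact j.2
    have hne : (0 : C) ≠ (⟨c, hcC⟩ : C) := fun h => hc0 (congrArg Subtype.val h).symm
    -- card of kernel is 2
    let f' := f.toAddMonoidHom
    have hkerset : (AddMonoidHom.ker f' : Set C) = {0, ⟨c, hcC⟩} := by
      ext x
      simp only [SetLike.mem_coe, AddMonoidHom.mem_ker, Set.mem_insert_iff, Set.mem_singleton_iff]
      constructor
      · intro h
        rcases hker x h with h' | h'
        · exact Or.inl h'
        · exact Or.inr (Subtype.ext h')
      · rintro (rfl | rfl)
        · exact map_zero f
        · exact hfc
    have hkercard : Nat.card (AddMonoidHom.ker f') = 2 := by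
      have : Nat.card (AddMonoidHom.ker f') = ((AddMonoidHom.ker f' : Set C)).ncard :=
        Nat.card_coe_set_eq _
      rw [this, hkerset, Set.ncard_pair hne]
    have hC'card : Nat.card (AddMonoidHom.range f') = 2 ^ k := by
      have e1 : Nat.card C = Nat.card (C ⧸ AddMonoidHom.ker f') * Nat.card (AddMonoidHom.ker f') :=
        AddSubgroup.card_eq_card_quotient_mul_card_addSubgroup _
      have e2 : Nat.card (C ⧸ AddMonoidHom.ker f') = Nat.card (AddMonoidHom.range f') :=
        Nat.card_congr (QuotientAddGroup.quotientKerEquivRange f').toEquiv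
      rw [hcard, hkercard, e2] at e1
      have hfin : Nat.card (AddMonoidHom.range f') * 2 = 2 ^ k * 2 := by
        rw [← e1, pow_succ]
      omega
    let C' : Submodule (ZMod 2) (J → ZMod 2) := LinearMap.range f
    have hC'card2 : Nat.card C' = 2 ^ k := by
      rw [← hC'card]
      apply Nat.card_congr
      apply Equiv.subtypeEquivRight
      intro x
      constructor
      · rintro ⟨y, rfl⟩; exact ⟨y, rfl⟩
      · rintro ⟨y, rfl⟩; exact ⟨y, rfl⟩
    -- min weight of residual code
    have hmin' : ∀ y ∈ C', y ≠ 0 → cd w 2 ≤ hammingNorm y := by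
      rintro y ⟨x, rfl⟩ hy0
      rw [cd_le_iff (by norm_num : (0:ℕ) < 2)]
      have hfx : f x = r (x : ι → ZMod 2) := rfl
      have hBeq : (univ.filter fun i => c i = 0 ∧ ((x : ι → ZMod 2) + c) i ≠ 0)
          = (univ.filter fun i => c i = 0 ∧ (x : ι → ZMod 2) i ≠ 0) := by
        apply Finset.filter_congr
        intro i _
        constructor
        · rintro ⟨h1, h2⟩
          refine ⟨h1, ?_⟩
          intro h3
          apply h2
          show (x : ι → ZMod 2) i + c i = 0
          rw [h1, h3, add_zero]
        · rintro ⟨h1, h2⟩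
          refine ⟨h1, ?_⟩
          intro h3
          apply h2
          have : (x : ι → ZMod 2) i + c i = 0 := h3
          rw [h1, add_zero] at this
          exact this
      have e1 := wt_split c (x : ι → ZMod 2)
      have e2 := wt_split c ((x : ι → ZMod 2) + c)
      have e3 := wt_in_add c (x : ι → ZMod 2)
      rw [hBeq] at e2
      have hxne : (x : ι → ZMod 2) ≠ 0 := by
        intro h
        apply hy0
        rw [hfx, h, map_zero]
      have hxcne : (x : ι → ZMod 2) + c ≠ 0 := by
        intro h
        apply hy0
        have hxc : (x : ι → ZMod 2) = c := by
          have : (x : ι → ZMod 2) + c + c = c := by rw [h, zero_add]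
          rwa [add_assoc, hcc, add_zero] at this
        rw [hfx, hxc]
        exact hfc
      have l1 := hwmin _ x.2 hxne
      have l2 := hwmin _ (C.add_mem x.2 hcC) hxcne
      have hnfx : hammingNorm (f x) = #(univ.filter fun i => c i = 0 ∧ (x : ι → ZMod 2) i ≠ 0) := by
        rw [hfx, hnormr]
      rw [hcw] at e3
      rw [hnfx]
      omega
    have hIH := IH J C' (cd w 2) hC'card2 hmin'
    -- card of J
    have hcardJ : Fintype.card J + w = Fintype.card ι := by
      rw [← hcw, Fintype.card_subtype, hammingNorm]
      exact Finset.card_filter_add_card_filter_not _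
    -- final sum
    have hsum : ∑ i ∈ range (k+1), cd D (2^i)
        = (∑ i ∈ range k, cd D (2^(i+1))) + cd D 1 := by
      rw [Finset.sum_range_succ' (fun i => cd D (2^i)) k]
      simp
    rw [hsum, cd_one]
    have hterm : ∀ i, cd D (2^(i+1)) ≤ cd (cd w 2) (2^i) := by
      intro i
      have : cd w (2^(i+1)) = cd (cd w 2) (2^i) := by
        rw [cd_cd (by norm_num) (by positivity), pow_succ, mul_comm]
      rw [← this]
      exact cd_mono hDw
    calc (∑ i ∈ range k, cd D (2^(i+1))) + D
        ≤ (∑ i ∈ range k, cd (cd w 2) (2^i)) + w :=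
          Nat.add_le_add (Finset.sum_le_sum fun i _ => hterm i) hDw
      _ ≤ Fintype.card J + w := Nat.add_le_add_right hIH w
      _ = Fintype.card ι := hcardJ

section Counting
variable {m : ℕ}

lemma dotp_single (i : Fin m) (α : Fin m → ZMod 2) : dotp (Pi.single i 1) α = α i := by
  unfold dotp
  rw [Finset.sum_eq_single i]
  · simp
  · intro j _ hj; simp [Pi.single_eq_of_ne hj]
  · simp

lemma dotp_add_right (t β γ : Fin m → ZMod 2) : dotp t (β + γ) = dotp t β + dotp t γ := by
  unfold dotp
  rw [← Finset.sum_add_distrib]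
  exact Finset.sum_congr rfl fun i _ => by rw [Pi.add_apply, mul_add]

lemma dotp_add_left (t u α : Fin m → ZMod 2) : dotp (t + u) α = dotp t α + dotp u α := by
  unfold dotp
  rw [← Finset.sum_add_distrib]
  exact Finset.sum_congr rfl fun i _ => by rw [Pi.add_apply, add_mul]

lemma zmod2_ne_zero (u : ZMod 2) : u ≠ 0 ↔ u = 1 := by revert u; decide

lemma exists_dotp_one {α : Fin m → ZMod 2} (h : α ≠ 0) : ∃ t, dotp t α = 1 := by
  obtain ⟨i, hi⟩ : ∃ i, α i ≠ 0 := by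
    by_contra hc; push_neg at hc; exact h (funext hc)
  exact ⟨Pi.single i 1, by rw [dotp_single]; exact (zmod2_ne_zero _).mp hi⟩

lemma exists_dotp_pair {β γ : Fin m → ZMod 2} (hβ : β ≠ 0) (hγ : γ ≠ 0) (hβγ : β + γ ≠ 0) :
    ∃ u, dotp u β = 0 ∧ dotp u γ = 1 := by
  obtain ⟨p, hp⟩ := exists_dotp_one hγ
  rcases zmod2_cases (dotp p β) with h | h
  · exact ⟨p, h, hp⟩
  · obtain ⟨q, hq⟩ := exists_dotp_one hβγ
    rw [dotp_add_right] at hq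
    rcases zmod2_cases (dotp q β) with h' | h'
    · refine ⟨q, h', ?_⟩
      rw [h'] at hq; rwa [zero_add] at hq
    · refine ⟨p + q, ?_, ?_⟩
      · rw [dotp_add_left, h, h']; decide
      · have hqγ : dotp q γ = 0 := by
          rw [h'] at hq
          rcases zmod2_cases (dotp q γ) with h'' | h''
          · exact h''
          · rw [h''] at hq; exact absurd hq (by decide)
        rw [dotp_add_left, hp, hqγ, add_zero]

lemma add_add_cancel (t u : Fin m → ZMod 2) : t + u + u = t := by
  rw [add_assoc]
  have : u + u = 0 := by ext i; exact CharTwo.add_self_eq_zero _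
  rw [this, add_zero]

/-- shift bijection between the two fibers of `dotp · α` within an `+u`-invariant finset -/
lemma card_fiber_shift (S : Finset (Fin m → ZMod 2)) (α u : Fin m → ZMod 2)
    (hu : ∀ t ∈ S, t + u ∈ S) (huα : dotp u α = 1) :
    #(S.filter fun t => dotp t α = 0) = #(S.filter fun t => dotp t α = 1) := by
  apply Finset.card_nbij' (i := fun t => t + u) (j := fun t => t + u)
  · intro t ht
    simp only [mem_coe, mem_filter] at ht ⊢
    exact ⟨hu t ht.1, by rw [dotp_add_left, ht.2, huα, zero_add]⟩
  · intro t ht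
    simp only [mem_coe, mem_filter] at ht ⊢
    refine ⟨hu t ht.1, ?_⟩
    rw [dotp_add_left, ht.2, huα]
    decide
  · intro t _; exact add_add_cancel t u
  · intro t _; exact add_add_cancel t u

lemma card_fiber_double (S : Finset (Fin m → ZMod 2)) (α u : Fin m → ZMod 2)
    (hu : ∀ t ∈ S, t + u ∈ S) (huα : dotp u α = 1) :
    2 * #(S.filter fun t => dotp t α = 1) = #S := by
  have h1 := card_fiber_shift S α u hu huα
  have h2 : #(S.filter fun t => dotp t α = 1) + #(S.filter fun t => ¬ dotp t α = 1) = #S :=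
    Finset.card_filter_add_card_filter_not _
  have h3 : (S.filter fun t => ¬ dotp t α = 1) = (S.filter fun t => dotp t α = 0) := by
    apply Finset.filter_congr
    intro t _
    rcases zmod2_cases (dotp t α) with h | h <;> simp [h]
  rw [h3, h1] at h2
  omega

lemma card_univ_vec : #(univ : Finset (Fin m → ZMod 2)) = 2 ^ m := by
  rw [Finset.card_univ, Fintype.card_fun]
  simp

/-- number of t with dotp t α = 1 over the whole space -/
lemma card_dotp_one {α : Fin m → ZMod 2} (h : α ≠ 0) :
    2 * #((univ : Finset (Fin m → ZMod 2)).filter fun t => dotp t α = 1) = 2 ^ m := by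
  obtain ⟨u, hu⟩ := exists_dotp_one h
  rw [card_fiber_double univ α u (fun t _ => mem_univ _) hu, card_univ_vec]

/-- number of t with dotp t β = 1 ∧ dotp t γ = 0, for β, γ, β+γ all nonzero -/
lemma card_dotp_pair {β γ : Fin m → ZMod 2} (hβ : β ≠ 0) (hγ : γ ≠ 0) (hβγ : β + γ ≠ 0) :
    4 * #((univ : Finset (Fin m → ZMod 2)).filter fun t => dotp t β = 1 ∧ dotp t γ = 0) = 2 ^ m := by
  obtain ⟨u, hu0, hu1⟩ := exists_dotp_pair hβ hγ hβγ
  have hS : ∀ t ∈ (univ : Finset (Fin m → ZMod 2)).filter (fun t => dotp t β = 1),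
      t + u ∈ (univ : Finset (Fin m → ZMod 2)).filter (fun t => dotp t β = 1) := by
    intro t ht
    simp only [mem_filter, mem_univ, true_and] at ht ⊢
    rw [dotp_add_left, ht, hu0, add_zero]
  have h1 := card_fiber_double ((univ : Finset (Fin m → ZMod 2)).filter (fun t => dotp t β = 1))
    γ u hS hu1
  rw [Finset.filter_filter] at h1
  have h2 := card_fiber_shift ((univ : Finset (Fin m → ZMod 2)).filter (fun t => dotp t β = 1))
    γ u hS hu1
  rw [Finset.filter_filter, Finset.filter_filter] at h2
  have h3 := card_dotp_one hβ
  calc 4 * #(univ.filter fun t => dotp t β = 1 ∧ dotp t γ = 0)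
      = 2 * (2 * #(univ.filter fun t => dotp t β = 1 ∧ dotp t γ = 1)) := by rw [← h2]; ring
    _ = 2 * #(univ.filter fun t => dotp t β = 1) := by rw [h1]
    _ = 2 ^ m := h3

lemma mem_deltaC {M : Finset (Fin m)} {t : Fin m → ZMod 2} :
    t ∈ deltaC M ↔ ∀ i, t i ≠ 0 → i ∈ M := by
  simp [deltaC]

lemma deltaC_add {M : Finset (Fin m)} {t u : Fin m → ZMod 2}
    (ht : t ∈ deltaC M) (hu : u ∈ deltaC M) : t + u ∈ deltaC M := by
  rw [mem_deltaC] at *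
  intro i hi
  by_contra hc
  have h1 : t i = 0 := by by_contra h; exact hc (ht i h)
  have h2 : u i = 0 := by by_contra h; exact hc (hu i h)
  exact hi (by rw [Pi.add_apply, h1, h2, add_zero])

lemma zero_mem_deltaC {M : Finset (Fin m)} : (0 : Fin m → ZMod 2) ∈ deltaC M := by
  rw [mem_deltaC]; intro i hi; exact absurd rfl hi

lemma card_deltaC (M : Finset (Fin m)) : #(deltaC M) = 2 ^ M.card := by
  have : #(deltaC M) = #(univ : Finset ({i // i ∈ M} → ZMod 2)) := by
    apply Finset.card_nbij' (i := fun t => fun j => t j.1)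
      (j := fun g => fun i => if h : i ∈ M then g ⟨i, h⟩ else 0)
    · intro t _; exact mem_univ _
    · intro g _
      rw [mem_coe, mem_deltaC]
      intro i hi
      by_contra hc
      apply hi
      simp [hc]
    · intro t ht
      rw [mem_coe, mem_deltaC] at ht
      funext i
      by_cases h : i ∈ M
      · simp [h]
      · simp only [h, dif_neg, not_false_iff]
        by_contra hc
        exact h (ht i (Ne.symm hc))
    · intro g _
      funext j
      simp [j.2]
  rw [this, Finset.card_univ, Fintype.card_fun, Fintype.card_coe]
  simp

/-- # of t in deltaC N with dotp t α = 1: either 0 or half -/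
lemma card_deltaC_dotp (N : Finset (Fin m)) (α : Fin m → ZMod 2) :
    #((deltaC N).filter fun t => dotp t α = 1) = 0 ∨
    2 * #((deltaC N).filter fun t => dotp t α = 1) = 2 ^ N.card := by
  by_cases h : ∃ t ∈ deltaC N, dotp t α = 1
  · obtain ⟨u, huN, huα⟩ := h
    right
    rw [card_fiber_double (deltaC N) α u (fun t ht => deltaC_add ht huN) huα, card_deltaC]
  · left
    rw [Finset.card_eq_zero, Finset.filter_eq_empty_iff]
    push_neg at h
    exact fun t ht => h t ht

end Counting

section Weight
variable {m : ℕ}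

lemma gcw_depends_fst (Ds : Finset ((Fin m → ZMod 2) × (Fin m → ZMod 2)))
    (v : (Fin m → ZMod 2) × (Fin m → ZMod 2)) : gcwR Ds v = gcwR Ds (v.1, 0) := rfl

lemma dotp_zero_right (t : Fin m → ZMod 2) : dotp t 0 = 0 := by
  unfold dotp; simp

lemma gcw_zero (Ds : Finset ((Fin m → ZMod 2) × (Fin m → ZMod 2)))
    (v : (Fin m → ZMod 2) × (Fin m → ZMod 2)) (h : v.1 = 0) : gcwR Ds v = 0 := by
  funext x
  rcases x with ⟨d, i⟩
  fin_cases i <;> simp [gcwR, grayPair, cwR, h, dotp_zero_right]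

lemma wt_formula (A B : Finset (Fin m → ZMod 2))
    (Ds : Finset ((Fin m → ZMod 2) × (Fin m → ZMod 2))) (hDs : Ds = A ×ˢ B)
    (v : (Fin m → ZMod 2) × (Fin m → ZMod 2)) :
    hammingNorm (gcwR Ds v) = ∑ t₁ ∈ A, ∑ t₂ ∈ B,
      ((if dotp t₂ v.1 ≠ 0 then 1 else 0) +
       (if dotp t₁ v.1 + dotp t₂ v.1 ≠ 0 then 1 else 0)) := by
  have h0 : hammingNorm (gcwR Ds v)
      = ∑ x : {d // d ∈ Ds} × Fin 2, (if gcwR Ds v x ≠ 0 then 1 else 0) := by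
    rw [hammingNorm, Finset.card_filter]
  rw [h0, Fintype.sum_prod_type]
  have h1 : ∀ d : {d // d ∈ Ds},
      (∑ i : Fin 2, if gcwR Ds v (d, i) ≠ 0 then 1 else 0)
      = ((if dotp d.1.2 v.1 ≠ 0 then 1 else 0) +
         (if dotp d.1.1 v.1 + dotp d.1.2 v.1 ≠ 0 then 1 else 0)) := by
    intro d
    rw [Fin.sum_univ_two]
    have e0 : gcwR Ds v (d, 0) = dotp d.1.2 v.1 := by simp [gcwR, grayPair, cwR]
    have e1 : gcwR Ds v (d, 1) = dotp d.1.1 v.1 + dotp d.1.2 v.1 := by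
      simp [gcwR, grayPair, cwR]
    rw [e0, e1]
  rw [Finset.sum_congr rfl (fun d _ => h1 d)]
  rw [Finset.univ_eq_attach, Finset.sum_attach Ds
    (fun d => ((if dotp d.2 v.1 ≠ 0 then 1 else 0) +
       (if dotp d.1 v.1 + dotp d.2 v.1 ≠ 0 then 1 else 0)))]
  rw [hDs, Finset.sum_product]

/-- evaluation of the double sum -/
lemma wt_eval (A B : Finset (Fin m → ZMod 2)) (α : Fin m → ZMod 2)
    (Pa Qb : ℕ) (hPa : Pa = #(A.filter fun t => dotp t α = 1))
    (hQb : Qb = #(B.filter fun t => dotp t α = 1)) :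
    (∑ t₁ ∈ A, ∑ t₂ ∈ B,
      ((if dotp t₂ α ≠ 0 then 1 else 0) +
       (if dotp t₁ α + dotp t₂ α ≠ 0 then 1 else 0)))
    = #A * Qb + (#A - Pa) * Qb + Pa * (#B - Qb) := by
  have inner1 : (∑ t₂ ∈ B, (if dotp t₂ α ≠ 0 then (1:ℕ) else 0)) = Qb := by
    rw [hQb, Finset.card_filter]
    apply Finset.sum_congr rfl
    intro t _
    congr 1
    simp [zmod2_ne_zero]
  have innerB0 : ∀ t₁ ∈ A, dotp t₁ α = 0 →
      (∑ t₂ ∈ B, (if dotp t₁ α + dotp t₂ α ≠ 0 then (1:ℕ) else 0)) = Qb := by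
    intro t₁ _ h
    rw [hQb, Finset.card_filter]
    apply Finset.sum_congr rfl
    intro t _
    congr 1
    rw [h, zero_add]
    simp [zmod2_ne_zero]
  have innerB1 : ∀ t₁ ∈ A, dotp t₁ α = 1 →
      (∑ t₂ ∈ B, (if dotp t₁ α + dotp t₂ α ≠ 0 then (1:ℕ) else 0)) = #B - Qb := by
    intro t₁ _ h
    have : (∑ t₂ ∈ B, (if dotp t₁ α + dotp t₂ α ≠ 0 then (1:ℕ) else 0))
        = #(B.filter fun t => ¬ dotp t α = 1) := by
      rw [Finset.card_filter]
      apply Finset.sum_congr rfl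
      intro t _
      congr 1
      rw [h]
      rcases zmod2_cases (dotp t α) with h' | h' <;> simp [h'] <;> decide
    rw [this, Finset.filter_not, Finset.card_sdiff_of_subset (Finset.filter_subset _ _), hQb]
  have hsplit : ∀ t₁ ∈ A,
      (∑ t₂ ∈ B, ((if dotp t₂ α ≠ 0 then (1:ℕ) else 0) +
        (if dotp t₁ α + dotp t₂ α ≠ 0 then 1 else 0)))
      = Qb + (if dotp t₁ α = 1 then #B - Qb else Qb) := by
    intro t₁ ht₁
    rw [Finset.sum_add_distrib, inner1]
    congr 1
    rcases zmod2_cases (dotp t₁ α) with h | h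
    · rw [innerB0 t₁ ht₁ h, if_neg (by rw [h]; decide)]
    · rw [innerB1 t₁ ht₁ h, if_pos h]
  rw [Finset.sum_congr rfl hsplit, Finset.sum_add_distrib, Finset.sum_const, smul_eq_mul,
    add_assoc]
  congr 1
  rw [Finset.sum_ite, Finset.sum_const, Finset.sum_const, smul_eq_mul, smul_eq_mul]
  have hneg : #(A.filter fun t => ¬ dotp t α = 1) = #A - Pa := by
    rw [Finset.filter_not, Finset.card_sdiff_of_subset (Finset.filter_subset _ _), hPa]
  rw [hneg, ← hPa, add_comm]

end Weight

section Arith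

lemma pow_mul_sub (a b c : ℕ) : 2^a * (2^b - 2^c) = 2^(a+b) - 2^(a+c) := by
  rw [Nat.mul_sub, pow_add, pow_add]

lemma pow2_le {b c : ℕ} (h : c ≤ b) : (2:ℕ)^c ≤ 2^b :=
  Nat.pow_le_pow_right (by norm_num) h

lemma arith_cases (m k ℓ Pa R U Qb Bc wt : ℕ)
    (hm : 1 ≤ m) (hl1 : 1 ≤ ℓ) (hlm : ℓ + 1 ≤ m)
    (hU : 2 * U = 2^m) (hB : Bc = 2^m - 2^ℓ)
    (hQb : Qb + R = U) (hPa : Pa = 0 ∨ 2 * Pa = 2^k) (hR : R = 0 ∨ 2 * R = 2^ℓ)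
    (hPaA : Pa ≤ 2^k)
    (hwt : wt = 2^k * Qb + (2^k - Pa) * Qb + Pa * (Bc - Qb)) :
    (wt = 2^(m+k) ∨ wt = 2^k * (2^m - 2^(ℓ-1)) ∨ wt = 2^k * (2^m - 2^ℓ)) ∧
    2^k * (2^m - 2^ℓ) ≤ wt ∧
    (R ≠ 0 → wt = 2^k * (2^m - 2^ℓ)) := by
  have f1 : (2:ℕ)^m = 2 * 2^(m-1) := by
    rw [← pow_succ']; congr 1; omega
  have f2 : (2:ℕ)^ℓ = 2 * 2^(ℓ-1) := by
    rw [← pow_succ']; congr 1; omega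
  have hUv : U = 2^(m-1) := by omega
  have hle1 : (2:ℕ)^ℓ ≤ 2^(m-1) := pow2_le (by omega)
  have hle2 : (2:ℕ)^(ℓ-1) ≤ 2^(m-1) := pow2_le (by omega)
  have f3 : 2^(m+k) = 2 * 2^(k+(m-1)) := by
    rw [← pow_succ']; congr 1; omega
  have f4 : 2^k * ((2:ℕ)^m - 2^(ℓ-1)) = 2^(k+m) - 2^(k+(ℓ-1)) := pow_mul_sub _ _ _
  have f5 : 2^k * ((2:ℕ)^m - 2^ℓ) = 2^(k+m) - 2^(k+ℓ) := pow_mul_sub _ _ _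
  have f6 : (2:ℕ)^(k+m) = 2 * 2^(k+(m-1)) := by rw [← pow_succ']; congr 1; omega
  have f7 : (2:ℕ)^(k+ℓ) = 2 * 2^(k+(ℓ-1)) := by rw [← pow_succ']; congr 1; omega
  have f8 : (2:ℕ)^(k+(ℓ-1)) ≤ 2^(k+(m-1)) := pow2_le (by omega)
  have f9 : (2:ℕ)^(k+ℓ) ≤ 2^(k+(m-1)) := pow2_le (by omega)
  rcases hR with hR0 | hR2
  · -- R = 0, Qb = U = 2^(m-1)
    have hQv : Qb = 2^(m-1) := by omega
    rcases hPa with hP0 | hP2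
    · -- weight 2^(m+k)
      have e1 : 2^k * Qb = 2^(k+(m-1)) := by rw [hQv, pow_add]
      have hwt' : wt = 2^(m+k) := by
        rw [hwt, hP0]
        simp only [Nat.sub_zero, zero_mul, add_zero, mul_zero]
        rw [e1]
        omega
      refine ⟨Or.inl hwt', ?_, fun h => absurd hR0 h⟩
      rw [hwt', f5]
      omega
    · -- Pa = 2^(k-1), weight middle
      have hk1 : 1 ≤ k := by
        by_contra h
        have : k = 0 := by omega
        rw [this, pow_zero] at hP2
        omega
      have fk : (2:ℕ)^k = 2 * 2^(k-1) := by rw [← pow_succ']; congr 1; omega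
      have hPv : Pa = 2^(k-1) := by omega
      have e1 : 2^k * Qb = 2^(k+(m-1)) := by rw [hQv, pow_add]
      have e2 : (2^k - Pa) * Qb = 2^((k-1)+(m-1)) := by
        have : 2^k - Pa = 2^(k-1) := by omega
        rw [this, hQv, pow_add]
      have e3 : Bc - Qb = 2^(m-1) - 2^ℓ := by omega
      have e4 : Pa * (Bc - Qb) = 2^((k-1)+(m-1)) - 2^((k-1)+ℓ) := by
        rw [e3, hPv, pow_mul_sub]
      have g1 : (2:ℕ)^(k+(m-1)) = 2 * 2^((k-1)+(m-1)) := by rw [← pow_succ']; congr 1; omega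
      have g2 : (2:ℕ)^(k+(ℓ-1)) = 2^((k-1)+ℓ) := by congr 1; omega
      have g3 : (2:ℕ)^((k-1)+ℓ) ≤ 2^((k-1)+(m-1)) := pow2_le (by omega)
      have hwt' : wt = 2^k * (2^m - 2^(ℓ-1)) := by
        rw [hwt, e1, e2, e4, f4]
        omega
      refine ⟨Or.inr (Or.inl hwt'), ?_, fun h => absurd hR0 h⟩
      rw [hwt', f4, f5]
      omega
  · -- R = 2^(ℓ-1), weight d
    have hRv : R = 2^(ℓ-1) := by omega
    have hQv : Qb = 2^(m-1) - 2^(ℓ-1) := by omega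
    have e0 : 2^k * Qb = 2^(k+(m-1)) - 2^(k+(ℓ-1)) := by
      rw [hQv, pow_mul_sub]
    have hwt' : wt = 2^k * (2^m - 2^ℓ) := by
      rcases hPa with hP0 | hP2
      · rw [hwt, hP0]
        simp only [Nat.sub_zero, zero_mul, add_zero, mul_zero]
        rw [e0, f5]
        omega
      · have hk1 : 1 ≤ k := by
          by_contra h
          have : k = 0 := by omega
          rw [this, pow_zero] at hP2
          omega
        have fk : (2:ℕ)^k = 2 * 2^(k-1) := by rw [← pow_succ']; congr 1; omega
        have hPv : Pa = 2^(k-1) := by omega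
        have e2 : (2^k - Pa) * Qb = 2^((k-1)+(m-1)) - 2^((k-1)+(ℓ-1)) := by
          have : 2^k - Pa = 2^(k-1) := by omega
          rw [this, hQv, pow_mul_sub]
        have e3 : Bc - Qb = 2^(m-1) - 2^(ℓ-1) := by omega
        have e4 : Pa * (Bc - Qb) = 2^((k-1)+(m-1)) - 2^((k-1)+(ℓ-1)) := by
          rw [e3, hPv, pow_mul_sub]
        have g1 : (2:ℕ)^(k+(m-1)) = 2 * 2^((k-1)+(m-1)) := by rw [← pow_succ']; congr 1; omega
        have g2 : (2:ℕ)^(k+(ℓ-1)) = 2 * 2^((k-1)+(ℓ-1)) := by rw [← pow_succ']; congr 1; omega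
        have g3 : (2:ℕ)^((k-1)+(ℓ-1)) ≤ 2^((k-1)+(m-1)) := pow2_le (by omega)
        rw [hwt, e0, e2, e4, f5]
        omega
    exact ⟨Or.inr (Or.inr hwt'), le_of_eq hwt'.symm, fun _ => hwt'⟩

end Arith

section Spec
variable {m : ℕ}

lemma card_compl_deltaC (hm : 1 ≤ m) (N : Finset (Fin m)) :
    #((deltaC N)ᶜ) = 2^m - 2^N.card := by
  rw [Finset.card_compl, card_deltaC]
  congr 1
  rw [Fintype.card_fun]
  simp

lemma single_mem_deltaC {N : Finset (Fin m)} {i : Fin m} (hi : i ∈ N) :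
    Pi.single i (1 : ZMod 2) ∈ deltaC N := by
  rw [mem_deltaC]
  intro j hj
  by_cases h : j = i
  · subst h; exact hi
  · exact absurd (Pi.single_eq_of_ne h 1) hj

lemma wt_spec (hm : 1 ≤ m) (M N : Finset (Fin m)) (hN : N ≠ ∅) (hNu : N ≠ Finset.univ)
    (Ds : Finset ((Fin m → ZMod 2) × (Fin m → ZMod 2)))
    (hDs : Ds = deltaC M ×ˢ (deltaC N)ᶜ)
    (v : (Fin m → ZMod 2) × (Fin m → ZMod 2)) (hv : v.1 ≠ 0) :
    (hammingNorm (gcwR Ds v) = 2^(m+M.card) ∨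
     hammingNorm (gcwR Ds v) = 2^M.card * (2^m - 2^(N.card - 1)) ∨
     hammingNorm (gcwR Ds v) = 2^M.card * (2^m - 2^N.card)) ∧
    2^M.card * (2^m - 2^N.card) ≤ hammingNorm (gcwR Ds v) ∧
    ((∃ i ∈ N, v.1 i ≠ 0) → hammingNorm (gcwR Ds v) = 2^M.card * (2^m - 2^N.card)) := by
  set α := v.1 with hα
  set Pa := #((deltaC M).filter fun t => dotp t α = 1) with hPadef
  set R := #((deltaC N).filter fun t => dotp t α = 1) with hRdef
  set U := #((univ : Finset (Fin m → ZMod 2)).filter fun t => dotp t α = 1) with hUdef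
  set Qb := #(((deltaC N)ᶜ).filter fun t => dotp t α = 1) with hQdef
  have hwt : hammingNorm (gcwR Ds v)
      = 2^M.card * Qb + (2^M.card - Pa) * Qb + Pa * (#((deltaC N)ᶜ) - Qb) := by
    rw [wt_formula _ _ Ds hDs v, wt_eval _ _ α Pa Qb hPadef hQdef, card_deltaC]
  have hQR : Qb + R = U := by
    rw [hQdef, hRdef, hUdef]
    rw [← Finset.card_union_of_disjoint
      (Finset.disjoint_filter_filter (disjoint_compl_left))]
    congr 1
    rw [← Finset.filter_union]
    congr 1
    ext t
    simp only [Finset.mem_union, Finset.mem_compl, Finset.mem_univ, iff_true]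
    tauto
  have hU2 : 2 * U = 2^m := card_dotp_one hv
  have hPa : Pa = 0 ∨ 2 * Pa = 2^M.card := by
    rcases card_deltaC_dotp M α with h | h
    · exact Or.inl h
    · exact Or.inr h
  have hR : R = 0 ∨ 2 * R = 2^N.card := by
    rcases card_deltaC_dotp N α with h | h
    · exact Or.inl h
    · exact Or.inr h
  have hPaA : Pa ≤ 2^M.card := by
    rw [← card_deltaC M]
    exact Finset.card_le_card (Finset.filter_subset _ _)
  have hl1 : 1 ≤ N.card := Finset.card_pos.mpr (Finset.nonempty_iff_ne_empty.mpr hN)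
  have hlm : N.card + 1 ≤ m := by
    have h := Finset.card_lt_card (Finset.ssubset_univ_iff.mpr hNu)
    rwa [Finset.card_univ, Fintype.card_fin, Nat.lt_iff_add_one_le] at h
  obtain ⟨h3, hmin, hlast⟩ := arith_cases m M.card N.card Pa R U Qb (#((deltaC N)ᶜ))
    (hammingNorm (gcwR Ds v)) hm hl1 hlm hU2 (card_compl_deltaC hm N) hQR hPa hR hPaA hwt
  refine ⟨h3, hmin, ?_⟩
  rintro ⟨i, hiN, hiα⟩
  apply hlast
  apply Finset.card_ne_zero_of_mem (a := Pi.single i 1)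
  rw [Finset.mem_filter]
  exact ⟨single_mem_deltaC hiN, by rw [dotp_single]; exact (zmod2_ne_zero _).mp hiα⟩

end Spec

section Sums

lemma lt_cd {a b t : ℕ} (hb : 0 < b) (h : b * t < a) : t < cd a b := by
  by_contra hc
  push_neg at hc
  have := (cd_le_iff hb).mp hc
  omega

lemma sum_two_pow (n : ℕ) : ∑ i ∈ range n, 2^i = 2^n - 1 := by
  induction n with
  | zero => simp
  | succ n ih =>
    rw [Finset.sum_range_succ, ih, pow_succ]
    have : 1 ≤ 2^n := Nat.one_le_two_pow
    omega

lemma sum_pow_sub (e n : ℕ) (h : n ≤ e + 1) :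
    ∑ i ∈ range n, 2^(e - i) = 2^(e+1) - 2^(e+1-n) := by
  have h0 := Finset.sum_range_reflect (fun i => 2^(e-i)) n
  rw [← h0]
  have h1 : ∀ j ∈ range n, 2^(e - (n - 1 - j)) = 2^(e+1-n) * 2^j := by
    intro j hj
    rw [Finset.mem_range] at hj
    rw [← pow_add]
    congr 1
    omega
  rw [Finset.sum_congr rfl h1, ← Finset.mul_sum, sum_two_pow, Nat.mul_sub, mul_one, ← pow_add]
  congr 2
  omega

/-- lower bound for terms i ≤ k+ℓ : A_i + 1 ≤ t_i + B_i -/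
lemma term_bound1 (m k ℓ i : ℕ) (hlm : ℓ ≤ m) (hi : i ≤ k + ℓ) :
    2^(k+m-i) + 1 ≤ cd (2^k * (2^m - 2^ℓ) + 1) (2^i) + 2^(k+ℓ-i) := by
  have hd : 2^k * (2^m - 2^ℓ) = 2^(k+m) - 2^(k+ℓ) := pow_mul_sub _ _ _
  have hBA : (2:ℕ)^(k+ℓ-i) ≤ 2^(k+m-i) := pow2_le (by omega)
  have hlow : 2^(k+m-i) - 2^(k+ℓ-i) < cd (2^k * (2^m - 2^ℓ) + 1) (2^i) := by
    apply lt_cd (Nat.two_pow_pos i)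
    have : 2^i * (2^(k+m-i) - 2^(k+ℓ-i)) = 2^(i+(k+m-i)) - 2^(i+(k+ℓ-i)) := pow_mul_sub _ _ _
    rw [this]
    have e1 : i+(k+m-i) = k+m := by omega
    have e2 : i+(k+ℓ-i) = k+ℓ := by omega
    rw [e1, e2, hd]
    have : (2:ℕ)^(k+ℓ) ≤ 2^(k+m) := pow2_le (by omega)
    omega
  omega

/-- lower bound for terms k+ℓ < i < m (case ii tail) : A_i ≤ t_i -/
lemma term_bound2 (m k ℓ i : ℕ) (hlm : ℓ ≤ m) (hi : k + ℓ < i) (him : i < m) :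
    2^(k+m-i) ≤ cd (2^k * (2^m - 2^ℓ) + 1) (2^i) := by
  have hd : 2^k * (2^m - 2^ℓ) = 2^(k+m) - 2^(k+ℓ) := pow_mul_sub _ _ _
  have h1 : 2^(k+m-i) - 1 < cd (2^k * (2^m - 2^ℓ) + 1) (2^i) := by
    apply lt_cd (Nat.two_pow_pos i)
    have key : 2^i * (2^(k+m-i) - 2^0) = 2^(i+(k+m-i)) - 2^(i+0) := pow_mul_sub _ _ _
    rw [pow_zero] at key
    have e1 : (2:ℕ)^(i+(k+m-i)) = 2^(k+m) := by congr 1; omega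
    have e2 : (2:ℕ)^(i+0) = 2^i := by congr 1
    rw [key, e1, e2, hd]
    have h2 : (2:ℕ)^(k+ℓ) < 2^i := Nat.pow_lt_pow_right (by norm_num) hi
    have h3 : (2:ℕ)^i ≤ 2^(k+m) := pow2_le (by omega)
    omega
  have : (1:ℕ) ≤ 2^(k+m-i) := Nat.one_le_two_pow
  omega

lemma griesmer_sum_ii (m k ℓ : ℕ) (hl1 : 1 ≤ ℓ) (hlm : ℓ + 1 ≤ m) (hkl : k + ℓ ≤ m - 1)
    (hcond : 2^(k+1) - 1 < k + ℓ + 1) :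
    2 * (2^k * (2^m - 2^ℓ)) < ∑ i ∈ range m, cd (2^k * (2^m - 2^ℓ) + 1) (2^i) := by
  set d := 2^k * (2^m - 2^ℓ) with hddef
  have hsm : k + ℓ + 1 ≤ m := by omega
  have hA : ∑ i ∈ range m, 2^(k+m-i) = 2^(k+m+1) - 2^(k+1) := by
    have := sum_pow_sub (k+m) m (by omega)
    rw [this]
    congr 2
    omega
  have hAsplit : (∑ i ∈ range (k+ℓ+1), 2^(k+m-i)) + (∑ i ∈ Finset.Ico (k+ℓ+1) m, 2^(k+m-i))
      = 2^(k+m+1) - 2^(k+1) := by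
    rw [Finset.sum_range_add_sum_Ico _ hsm, hA]
  have hB : ∑ i ∈ range (k+ℓ+1), 2^(k+ℓ-i) = 2^(k+ℓ+1) - 1 := by
    have := sum_pow_sub (k+ℓ) (k+ℓ+1) (by omega)
    rw [this]
    have e2 : k+ℓ+1-(k+ℓ+1) = 0 := by omega
    rw [e2, pow_zero]
  have hpart1 : (∑ i ∈ range (k+ℓ+1), 2^(k+m-i)) + (k+ℓ+1)
      ≤ (∑ i ∈ range (k+ℓ+1), cd (d+1) (2^i)) + (2^(k+ℓ+1) - 1) := by
    have h1 : ∀ i ∈ range (k+ℓ+1), 2^(k+m-i) + 1 ≤ cd (d+1) (2^i) + 2^(k+ℓ-i) := by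
      intro i hi
      rw [Finset.mem_range] at hi
      exact term_bound1 m k ℓ i (by omega) (by omega)
    have h2 := Finset.sum_le_sum h1
    rw [Finset.sum_add_distrib, Finset.sum_add_distrib, Finset.sum_const, smul_eq_mul,
      mul_one, Finset.card_range, hB] at h2
    omega
  have hpart2 : ∑ i ∈ Finset.Ico (k+ℓ+1) m, 2^(k+m-i) ≤ ∑ i ∈ Finset.Ico (k+ℓ+1) m, cd (d+1) (2^i) := by
    apply Finset.sum_le_sum
    intro i hi
    rw [Finset.mem_Ico] at hi
    exact term_bound2 m k ℓ i (by omega) (by omega) hi.2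
  have hsplitT : (∑ i ∈ range (k+ℓ+1), cd (d+1) (2^i)) + (∑ i ∈ Finset.Ico (k+ℓ+1) m, cd (d+1) (2^i))
      = ∑ i ∈ range m, cd (d+1) (2^i) := Finset.sum_range_add_sum_Ico _ hsm
  have hd : d = 2^(k+m) - 2^(k+ℓ) := pow_mul_sub _ _ _
  have f1 : (2:ℕ)^(k+m+1) = 2 * 2^(k+m) := by rw [pow_succ]; ring
  have f2 : (2:ℕ)^(k+ℓ+1) = 2 * 2^(k+ℓ) := by rw [pow_succ]; ring
  have f3 : (2:ℕ)^(k+ℓ) ≤ 2^(k+m) := pow2_le (by omega)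
  have f4 : (2:ℕ)^(k+1) ≤ 2^(k+m) := pow2_le (by omega)
  have f0 : (1:ℕ) ≤ 2^(k+ℓ) := Nat.one_le_two_pow
  have f0' : (1:ℕ) ≤ 2^(k+m) := Nat.one_le_two_pow
  omega

lemma griesmer_sum_iii (m k ℓ : ℕ) (hm : 1 ≤ m) (hl1 : 1 ≤ ℓ) (hlm : ℓ + 1 ≤ m)
    (hkl : m ≤ k + ℓ)
    (hcond : 2^(k+ℓ+1-m) * (2^(m-ℓ) - 1) < m) :
    2 * (2^k * (2^m - 2^ℓ)) < ∑ i ∈ range m, cd (2^k * (2^m - 2^ℓ) + 1) (2^i) := by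
  set d := 2^k * (2^m - 2^ℓ) with hddef
  have hA : ∑ i ∈ range m, 2^(k+m-i) = 2^(k+m+1) - 2^(k+1) := by
    have := sum_pow_sub (k+m) m (by omega)
    rw [this]
    congr 2
    omega
  have hB : ∑ i ∈ range m, 2^(k+ℓ-i) = 2^(k+ℓ+1) - 2^(k+ℓ+1-m) := by
    exact sum_pow_sub (k+ℓ) m (by omega)
  have hpart : (∑ i ∈ range m, 2^(k+m-i)) + m
      ≤ (∑ i ∈ range m, cd (d+1) (2^i)) + (2^(k+ℓ+1) - 2^(k+ℓ+1-m)) := by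
    have h1 : ∀ i ∈ range m, 2^(k+m-i) + 1 ≤ cd (d+1) (2^i) + 2^(k+ℓ-i) := by
      intro i hi
      rw [Finset.mem_range] at hi
      exact term_bound1 m k ℓ i (by omega) (by omega)
    have h2 := Finset.sum_le_sum h1
    rw [Finset.sum_add_distrib, Finset.sum_add_distrib, Finset.sum_const, smul_eq_mul,
      mul_one, Finset.card_range, hB] at h2
    omega
  have hX : 2^(k+ℓ+1-m) * (2^(m-ℓ) - 1) = 2^(k+1) - 2^(k+ℓ+1-m) := by
    have h0 : 2^(k+ℓ+1-m) * ((2:ℕ)^(m-ℓ) - 2^0) = 2^((k+ℓ+1-m)+(m-ℓ)) - 2^((k+ℓ+1-m)+0) :=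
      pow_mul_sub _ _ _
    rw [pow_zero] at h0
    rw [h0]
    congr 2
    omega
  have hd : d = 2^(k+m) - 2^(k+ℓ) := pow_mul_sub _ _ _
  have f1 : (2:ℕ)^(k+m+1) = 2 * 2^(k+m) := by rw [pow_succ]; ring
  have f2 : (2:ℕ)^(k+ℓ+1) = 2 * 2^(k+ℓ) := by rw [pow_succ]; ring
  have f3 : (2:ℕ)^(k+ℓ) ≤ 2^(k+m) := pow2_le (by omega)
  have f4 : (2:ℕ)^(k+1) ≤ 2^(k+m) := pow2_le (by omega)
  have f5 : (2:ℕ)^(k+ℓ+1-m) ≤ 2^(k+1) := pow2_le (by omega)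
  have f0 : (1:ℕ) ≤ 2^(k+ℓ) := Nat.one_le_two_pow
  have f0' : (1:ℕ) ≤ 2^(k+m) := Nat.one_le_two_pow
  have f0'' : (1:ℕ) ≤ 2^(k+ℓ+1-m) := Nat.one_le_two_pow
  have f0''' : (1:ℕ) ≤ 2^(k+1) := Nat.one_le_two_pow
  have f6 : (2:ℕ)^(k+ℓ+1-m) ≤ 2^(k+ℓ) := pow2_le (by omega)
  rw [hX] at hcond
  omega

end Sums

lemma dotp_zero_left {m : ℕ} (α : Fin m → ZMod 2) : dotp 0 α = 0 := by
  unfold dotp; simp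

theorem stmt_17 {m : ℕ} (hm : 1 ≤ m) (M N : Finset (Fin m))
    (hN : N ≠ ∅) (hNu : N ≠ Finset.univ)
    (Ds : Finset ((Fin m → ZMod 2) × (Fin m → ZMod 2)))
    (hDs : Ds = deltaC M ×ˢ (deltaC N)ᶜ) :
    (2 * Ds.card = 2 ^ (M.card + 1) * (2 ^ m - 2 ^ N.card)) ∧
    ((Finset.univ : Finset ((Fin m → ZMod 2) × (Fin m → ZMod 2))).image (gcwR Ds)).card = 2 ^ m ∧
    (∀ v w : (Fin m → ZMod 2) × (Fin m → ZMod 2), ∃ z : (Fin m → ZMod 2) × (Fin m → ZMod 2), gcwR Ds z = gcwR Ds v + gcwR Ds w) ∧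
    (∀ v : (Fin m → ZMod 2) × (Fin m → ZMod 2), gcwR Ds v ≠ 0 → 2 ^ M.card * (2 ^ m - 2 ^ N.card) ≤ hammingNorm (gcwR Ds v)) ∧
    (∃ v : (Fin m → ZMod 2) × (Fin m → ZMod 2), gcwR Ds v ≠ 0 ∧ hammingNorm (gcwR Ds v) = 2 ^ M.card * (2 ^ m - 2 ^ N.card)) ∧
    (∀ v : (Fin m → ZMod 2) × (Fin m → ZMod 2), gcwR Ds v ≠ 0 →
        hammingNorm (gcwR Ds v) = 2 ^ (m + M.card) ∨
        hammingNorm (gcwR Ds v) = 2 ^ M.card * (2 ^ m - 2 ^ (N.card - 1)) ∨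
        hammingNorm (gcwR Ds v) = 2 ^ M.card * (2 ^ m - 2 ^ N.card)) ∧
    (N.card ≤ m - 2 →
      ∀ v w : (Fin m → ZMod 2) × (Fin m → ZMod 2), gcwR Ds v ≠ 0 → gcwR Ds w ≠ 0 →
      (∀ i, gcwR Ds w i ≠ 0 → gcwR Ds v i ≠ 0) → gcwR Ds w = gcwR Ds v) ∧
    (M.card + N.card ≤ m - 1 → 2 ^ (M.card + 1) - 1 < M.card + N.card + 1 →
      ¬ ∃ C : Submodule (ZMod 2) (({d // d ∈ Ds} × Fin 2) → ZMod 2),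
          Nat.card C = 2 ^ m ∧ ∀ x ∈ C, x ≠ 0 → 2 ^ M.card * (2 ^ m - 2 ^ N.card) + 1 ≤ hammingNorm x) ∧
    (m ≤ M.card + N.card → M.card + N.card ≤ 2 * m - 1 → 0 < 2 ^ (M.card + N.card + 1 - m) * (2 ^ (m - N.card) - 1) → 2 ^ (M.card + N.card + 1 - m) * (2 ^ (m - N.card) - 1) < m →
      ¬ ∃ C : Submodule (ZMod 2) (({d // d ∈ Ds} × Fin 2) → ZMod 2),
          Nat.card C = 2 ^ m ∧ ∀ x ∈ C, x ≠ 0 → 2 ^ M.card * (2 ^ m - 2 ^ N.card) + 1 ≤ hammingNorm x) := by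
  have hl1 : 1 ≤ N.card := Finset.card_pos.mpr (Finset.nonempty_iff_ne_empty.mpr hN)
  have hlm : N.card + 1 ≤ m := by
    have h := Finset.card_lt_card (Finset.ssubset_univ_iff.mpr hNu)
    rwa [Finset.card_univ, Fintype.card_fin, Nat.lt_iff_add_one_le] at h
  have hdpos : 0 < 2 ^ M.card * (2 ^ m - 2 ^ N.card) := by
    have h1 : (2:ℕ)^N.card < 2^m := Nat.pow_lt_pow_right (by norm_num) (by omega)
    have h2 : (0:ℕ) < 2^M.card := Nat.two_pow_pos _
    have h3 : (0:ℕ) < 2^m - 2^N.card := by omega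
    exact Nat.mul_pos h2 h3
  have hcard1 : Ds.card = 2 ^ M.card * (2 ^ m - 2 ^ N.card) := by
    rw [hDs, Finset.card_product, card_deltaC, card_compl_deltaC hm]
  have hv1 : ∀ v : (Fin m → ZMod 2) × (Fin m → ZMod 2), gcwR Ds v ≠ 0 → v.1 ≠ 0 :=
    fun v hv h0 => hv (gcw_zero Ds v h0)
  refine ⟨?_, ?_, ?_, ?_, ?_, ?_, ?_, ?_, ?_⟩
  · -- length
    rw [hcard1, pow_succ]
    ring
  · -- number of codewords
    have hinj : Function.Injective (fun α : Fin m → ZMod 2 => gcwR Ds (α, 0)) := by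
      intro α β h
      by_contra hne
      have hγ : α + β ≠ 0 := by
        intro h0
        apply hne
        have h2 : α + β + β = β := by rw [h0, zero_add]
        rwa [add_add_cancel] at h2
      have hall : ∀ t ∈ (deltaC N)ᶜ, dotp t (α + β) = 0 := by
        intro t ht
        have hmem : ((0 : Fin m → ZMod 2), t) ∈ Ds := by
          rw [hDs]; exact Finset.mem_product.mpr ⟨zero_mem_deltaC, ht⟩
        have h2 := congrFun h ((⟨((0 : Fin m → ZMod 2), t), hmem⟩ : {d // d ∈ Ds}), (0 : Fin 2))
        simp only [gcwR, grayPair, cwR, Matrix.cons_val_zero] at h2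
        rw [dotp_add_right, h2]
        exact CharTwo.add_self_eq_zero _
      have hU2 := card_dotp_one hγ
      have hpart : #((univ : Finset (Fin m → ZMod 2)).filter fun t => dotp t (α+β) = 1)
          + #((univ : Finset (Fin m → ZMod 2)).filter fun t => dotp t (α+β) = 0)
          = 2^m := by
        have h4 : ((univ : Finset (Fin m → ZMod 2)).filter fun t => ¬ dotp t (α+β) = 1)
            = ((univ : Finset (Fin m → ZMod 2)).filter fun t => dotp t (α+β) = 0) := by
          apply Finset.filter_congr
          intro t _
          rcases zmod2_cases (dotp t (α+β)) with h' | h' <;> simp [h']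
        rw [← h4, Finset.card_filter_add_card_filter_not, card_univ_vec]
      have hsub : insert 0 ((deltaC N)ᶜ)
          ⊆ (univ : Finset (Fin m → ZMod 2)).filter fun t => dotp t (α+β) = 0 := by
        intro t ht
        rw [Finset.mem_insert] at ht
        rw [Finset.mem_filter]
        refine ⟨mem_univ _, ?_⟩
        rcases ht with rfl | ht
        · exact dotp_zero_left _
        · exact hall t ht
      have h0nc : (0 : Fin m → ZMod 2) ∉ (deltaC N)ᶜ := by
        rw [Finset.mem_compl, not_not]
        exact zero_mem_deltaC
      have hcard3 := Finset.card_le_card hsub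
      rw [Finset.card_insert_of_notMem h0nc, card_compl_deltaC hm] at hcard3
      have hle : (2:ℕ)^N.card ≤ 2^(m-1) := pow2_le (by omega)
      have hf : (2:ℕ)^m = 2 * 2^(m-1) := by rw [← pow_succ']; congr 1; omega
      omega
    have himg : ((Finset.univ : Finset ((Fin m → ZMod 2) × (Fin m → ZMod 2))).image (gcwR Ds))
        = (univ : Finset (Fin m → ZMod 2)).image (fun α => gcwR Ds (α, 0)) := by
      ext y
      simp only [Finset.mem_image, Finset.mem_univ, true_and]
      constructor
      · rintro ⟨v, rfl⟩; exact ⟨v.1, (gcw_depends_fst Ds v).symm⟩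
      · rintro ⟨α, rfl⟩; exact ⟨(α, 0), rfl⟩
    rw [himg, Finset.card_image_of_injective _ hinj, card_univ_vec]
  · -- additivity
    intro v w
    refine ⟨v + w, ?_⟩
    funext x
    rcases x with ⟨d, i⟩
    have h1 : (v + w).1 = v.1 + w.1 := rfl
    fin_cases i <;>
      simp [gcwR, grayPair, cwR, h1, dotp_add_right] <;> ring
  · -- minimum distance lower bound
    intro v hv
    exact (wt_spec hm M N hN hNu Ds hDs v (hv1 v hv)).2.1
  · -- minimum attained
    obtain ⟨i, hiN⟩ := Finset.nonempty_iff_ne_empty.mpr hN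
    set v : (Fin m → ZMod 2) × (Fin m → ZMod 2) := (Pi.single i 1, 0) with hvdef
    have hv1' : v.1 ≠ 0 := by
      intro h
      have h2 : v.1 i = 0 := by rw [h]; rfl
      rw [hvdef] at h2
      simp only [Pi.single_eq_same] at h2
      exact one_ne_zero h2
    have hw := (wt_spec hm M N hN hNu Ds hDs v hv1').2.2
      ⟨i, hiN, by simp [hvdef, Pi.single_eq_same]⟩
    refine ⟨v, ?_, hw⟩
    intro h0
    rw [h0] at hw
    have : hammingNorm (0 : ({d // d ∈ Ds} × Fin 2) → ZMod 2) = 0 := hammingNorm_eq_zero.mpr rfl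
    omega
  · -- three weights
    intro v hv
    exact (wt_spec hm M N hN hNu Ds hDs v (hv1 v hv)).1
  · -- minimality
    intro hNm2 v w hv hw hsub
    have hα : v.1 ≠ 0 := hv1 v hv
    have hβ : w.1 ≠ 0 := hv1 w hw
    suffices hEq : w.1 = v.1 by
      rw [gcw_depends_fst Ds w, hEq, ← gcw_depends_fst]
    by_contra hne
    set α := v.1 with hαdef
    set β := w.1 with hβdef
    have hγ : β + α ≠ 0 := by
      intro h0
      apply hne
      have h2 : β + α + α = α := by rw [h0, zero_add]
      rwa [add_add_cancel] at h2
    have hββ : β + β = 0 := by ext j; exact CharTwo.add_self_eq_zero _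
    have hβγ : β + (β + α) = α := by rw [← add_assoc, hββ, zero_add]
    have hcondN : ∀ t ∈ (deltaC N)ᶜ, dotp t β = 1 → dotp t α = 1 := by
      intro t ht h1
      have hmem : ((0 : Fin m → ZMod 2), t) ∈ Ds := by
        rw [hDs]; exact Finset.mem_product.mpr ⟨zero_mem_deltaC, ht⟩
      have h2 := hsub ((⟨((0 : Fin m → ZMod 2), t), hmem⟩ : {d // d ∈ Ds}), (0 : Fin 2))
      simp only [gcwR, grayPair, cwR, Matrix.cons_val_zero] at h2
      rw [← zmod2_ne_zero]
      apply h2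
      rw [zmod2_ne_zero]
      exact h1
    have hTsub : ((deltaC N)ᶜ).filter (fun t => dotp t β = 1)
        ⊆ (univ : Finset (Fin m → ZMod 2)).filter
            (fun t => dotp t β = 1 ∧ dotp t (β + α) = 0) := by
      intro t ht
      rw [Finset.mem_filter] at ht ⊢
      refine ⟨mem_univ _, ht.2, ?_⟩
      rw [dotp_add_right, ht.2, hcondN t ht.1 ht.2]
      decide
    have hX := card_dotp_pair hβ hγ (by rw [hβγ]; exact hα)
    have hTX := Finset.card_le_card hTsub
    have hQR : #(((deltaC N)ᶜ).filter (fun t => dotp t β = 1))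
        + #((deltaC N).filter (fun t => dotp t β = 1))
        = #((univ : Finset (Fin m → ZMod 2)).filter (fun t => dotp t β = 1)) := by
      rw [← Finset.card_union_of_disjoint
        (Finset.disjoint_filter_filter (disjoint_compl_left))]
      congr 1
      rw [← Finset.filter_union]
      congr 1
      ext t
      simp only [Finset.mem_union, Finset.mem_compl, Finset.mem_univ, iff_true]
      tauto
    have hU2 := card_dotp_one hβ
    have hR : #((deltaC N).filter (fun t => dotp t β = 1)) = 0
        ∨ 2 * #((deltaC N).filter (fun t => dotp t β = 1)) = 2^N.card := by
      rcases card_deltaC_dotp N β with h | h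
      · exact Or.inl h
      · exact Or.inr h
    have hp1 : (2:ℕ)^(N.card - 1) < 2^(m-2) := Nat.pow_lt_pow_right (by norm_num) (by omega)
    have hp2 : (2:ℕ)^m = 4 * 2^(m-2) := by
      rw [show (4:ℕ) = 2^2 by norm_num, ← pow_add]
      congr 1
      omega
    have hp3 : (2:ℕ)^N.card = 2 * 2^(N.card - 1) := by rw [← pow_succ']; congr 1; omega
    omega
  · -- distance optimality (ii)
    intro h1 h2
    rintro ⟨C, hC, hminw⟩
    have hg := griesmer m ({d // d ∈ Ds} × Fin 2) C (2 ^ M.card * (2 ^ m - 2 ^ N.card) + 1)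
      hC hminw
    have hcard2 : Fintype.card ({d // d ∈ Ds} × Fin 2) = 2 * Ds.card := by
      rw [Fintype.card_prod, Fintype.card_coe, Fintype.card_fin]
      ring
    rw [hcard2, hcard1] at hg
    have hlt := griesmer_sum_ii m M.card N.card hl1 hlm (by omega) h2
    omega
  · -- distance optimality (iii)
    intro h1 h2 h3 h4
    rintro ⟨C, hC, hminw⟩
    have hg := griesmer m ({d // d ∈ Ds} × Fin 2) C (2 ^ M.card * (2 ^ m - 2 ^ N.card) + 1)
      hC hminw
    have hcard2 : Fintype.card ({d // d ∈ Ds} × Fin 2) = 2 * Ds.card := by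
      rw [Fintype.card_prod, Fintype.card_coe, Fintype.card_fin]
      ring
    rw [hcard2, hcard1] at hg
    have hlt := griesmer_sum_iii m M.card N.card hm hl1 hlm h1 h4
    omega
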